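/- Let G be a connected graph, S ⊆ V(G), and k ≥ 2 an integer. Suppose G has a partition of its vertex set into connected parts T_1,…,T_m with |T_i| = k for all i ≤ m−1 and |T_m| ≤ k. Then |S| + |V(G)|_k/(k−1) ≥ w_k(G,S), where |V(G)|_k denotes |V(G)| mod k and w_k(G,S) = (1/(k−1)) · Σ over components C of G−S of (|V(C)| mod k). -/

import Mathlib

open Finset SimpleGraph

private lemma aux_disjoint_foldr {V : Type} [DecidableEq V] (T : Finset V) :
    ∀ (L : List (Finset V)), (∀ U ∈ L, Disjoint T U) →
      Disjoint T (L.foldr (· ∪ ·) ∅) := by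
  intro L
  induction L with
  | nil => simp
  | cons U L ih =>
    intro h
    simp only [List.foldr_cons, Finset.disjoint_union_right]
    exact ⟨h U (by simp), ih fun U' hU' => h U' (by simp [hU'])⟩

private lemma aux_card_foldr {V : Type} [DecidableEq V] (A : Finset V) :
    ∀ (L : List (Finset V)), L.Pairwise _root_.Disjoint →
      (A ∩ L.foldr (· ∪ ·) ∅).card = (L.map (fun T => (A ∩ T).card)).sum := by
  intro L
  induction L with
  | nil => simp
  | cons T L ih =>
    intro h
    rw [List.pairwise_cons] at h
    have hd : Disjoint T (L.foldr (· ∪ ·) ∅) := aux_disjoint_foldr T L h.1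
    simp only [List.foldr_cons, List.map_cons, List.sum_cons]
    rw [Finset.inter_union_distrib_left, Finset.card_union_of_disjoint
      (hd.mono Finset.inter_subset_right Finset.inter_subset_right), ih h.2]

private lemma aux_swap {ι α : Type} [Fintype ι] (g : ι → α → ℕ) :
    ∀ (L : List α), ∑ i, (L.map (g i)).sum = (L.map (fun a => ∑ i, g i a)).sum := by
  intro L
  induction L with
  | nil => simp
  | cons a L ih =>
    simp only [List.map_cons, List.sum_cons]
    rw [Finset.sum_add_distrib, ih]

private lemma aux_modeq {α : Type} (k : ℕ) (f g : α → ℕ) :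
    ∀ (L : List α), (∀ a ∈ L, f a ≡ g a [MOD k]) →
      (L.map f).sum ≡ (L.map g).sum [MOD k] := by
  intro L
  induction L with
  | nil => exact fun _ => Nat.ModEq.refl _
  | cons a L ih =>
    intro h
    simp only [List.map_cons, List.sum_cons]
    exact (h a (by simp)).add (ih fun a' ha' => h a' (by simp [ha']))

private lemma aux_mul_sum {α : Type} (c : ℕ) (f : α → ℕ) :
    ∀ (L : List α), (L.map (fun a => c * f a)).sum = c * (L.map f).sum := by
  intro L
  induction L with
  | nil => simp
  | cons a L ih =>
    simp only [List.map_cons, List.sum_cons, ih, Nat.mul_add]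

private lemma aux_sum_le {α : Type} (f g : α → ℕ) :
    ∀ (L : List α), (∀ a ∈ L, f a ≤ g a) → (L.map f).sum ≤ (L.map g).sum := by
  intro L
  induction L with
  | nil => simp
  | cons a L ih =>
    intro h
    simp only [List.map_cons, List.sum_cons]
    exact Nat.add_le_add (h a (by simp)) (ih fun a' ha' => h a' (by simp [ha']))

/-- Let `G` be a connected graph, `S ⊆ V(G)` and `k ≥ 2`.  If the vertex set of `G` can be
partitioned into connected parts `T₁, …, T_m` with `|Tᵢ| = k` for all `i ≤ m − 1` and
`0 < |T_m| ≤ k`, then `|S| + (|V(G)| mod k)/(k−1) ≥ w_k(G,S)`, where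
`w_k(G,S) = (1/(k−1)) · Σ_C (|V(C)| mod k)`, the sum ranging over the connected components
`C` of `G − S`. -/
theorem modcut_lemma {V : Type} [Fintype V] [DecidableEq V]
    (G : SimpleGraph V) (hG : G.Connected) (S : Finset V) (k : ℕ) (hk : 2 ≤ k)
    (P : List (Finset V)) (hne : P ≠ [])
    (hdisj : P.Pairwise _root_.Disjoint)
    (hcover : P.foldr (· ∪ ·) ∅ = Finset.univ)
    (hconn : ∀ T ∈ P, (G.induce (T : Set V)).Connected)
    (hsize : ∀ T ∈ P.dropLast, T.card = k)
    (hlast : 0 < (P.getLast hne).card ∧ (P.getLast hne).card ≤ k) :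
    (1 / ((k : ℚ) - 1)) *
        ∑ᶠ C : (G.induce ((↑S : Set V)ᶜ)).ConnectedComponent,
          ((Nat.card C.supp % k : ℕ) : ℚ) ≤
      (S.card : ℚ) + ((Fintype.card V % k : ℕ) : ℚ) / ((k : ℚ) - 1) := by
  classical
  set W : Set V := (↑S : Set V)ᶜ with hWdef
  set G' := G.induce W with hG'def
  letI : Fintype G'.ConnectedComponent := Fintype.ofFinite _
  have hmemW : ∀ v : V, v ∈ W ↔ v ∉ S := by
    intro v; simp [hWdef]
  -- the vertex sets of components, as finsets of V
  set D : G'.ConnectedComponent → Finset V :=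
    fun C => Finset.univ.filter (fun v => ∃ h : v ∈ W, G'.connectedComponentMk ⟨v, h⟩ = C)
    with hDdef
  have hmemD : ∀ (C : G'.ConnectedComponent) (v : V),
      v ∈ D C ↔ ∃ h : v ∈ W, G'.connectedComponentMk ⟨v, h⟩ = C := by
    intro C v; simp [hDdef]
  -- Nat.card of supp equals card of D C
  have hDcard : ∀ C : G'.ConnectedComponent, Nat.card C.supp = (D C).card := by
    intro C
    have h1 : (Subtype.val '' C.supp : Set V) = ↑(D C) := by
      ext v
      constructor
      · rintro ⟨⟨u, hu⟩, h1, rfl⟩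
        exact Finset.mem_coe.2 ((hmemD C u).2 ⟨hu, h1⟩)
      · intro hv
        obtain ⟨h, h1⟩ := (hmemD C v).1 (Finset.mem_coe.1 hv)
        exact ⟨⟨v, h⟩, h1, rfl⟩
    calc Nat.card C.supp = C.supp.ncard := (Nat.card_coe_set_eq _)
      _ = (Subtype.val '' C.supp).ncard :=
          (Set.ncard_image_of_injective _ Subtype.val_injective).symm
      _ = (↑(D C) : Set V).ncard := by rw [h1]
      _ = (D C).card := Set.ncard_coe_finset _
  -- the D C's partition univ \ S
  have hpart : ∀ A : Finset V, ∑ C : G'.ConnectedComponent, (D C ∩ A).card = (A \ S).card := by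
    intro A
    have hdis : (↑(Finset.univ : Finset G'.ConnectedComponent) : Set G'.ConnectedComponent).PairwiseDisjoint
        (fun C => D C ∩ A) := by
      intro C _ C' _ hCC'
      refine Finset.disjoint_left.2 fun v hv hv' => hCC' ?_
      obtain ⟨h1, h2⟩ := (hmemD C v).1 (Finset.mem_inter.1 hv).1
      obtain ⟨h1', h2'⟩ := (hmemD C' v).1 (Finset.mem_inter.1 hv').1
      rw [← h2, ← h2']
    have hU : Finset.univ.biUnion (fun C : G'.ConnectedComponent => D C ∩ A) = A \ S := by
      ext v
      simp only [Finset.mem_biUnion, Finset.mem_univ, true_and, Finset.mem_inter,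
        Finset.mem_sdiff]
      constructor
      · rintro ⟨C, hv, hvA⟩
        obtain ⟨h1, _⟩ := (hmemD C v).1 hv
        exact ⟨hvA, (hmemW v).1 h1⟩
      · rintro ⟨hvA, hvS⟩
        refine ⟨G'.connectedComponentMk ⟨v, (hmemW v).2 hvS⟩, ?_, hvA⟩
        exact (hmemD _ v).2 ⟨(hmemW v).2 hvS, rfl⟩
    rw [← hU, Finset.card_biUnion (fun C _ C' _ h => hdis (by simp) (by simp) h)]
  -- parts avoiding S fall entirely inside one component
  have hgood : ∀ T ∈ P, T ∩ S = ∅ → ∀ C : G'.ConnectedComponent,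
      (D C ∩ T).card = 0 ∨ (D C ∩ T).card = T.card := by
    intro T hT hTS C
    by_cases hne' : (D C ∩ T).Nonempty
    · right
      obtain ⟨v, hv⟩ := hne'
      have hvD := (Finset.mem_inter.1 hv).1
      have hvT := (Finset.mem_inter.1 hv).2
      have hsub : (↑T : Set V) ⊆ W := by
        intro x hx
        refine (hmemW x).2 fun hxS => ?_
        have : x ∈ T ∩ S := Finset.mem_inter.2 ⟨Finset.mem_coe.1 hx, hxS⟩
        simp [hTS] at this
      congr 1
      apply Finset.Subset.antisymm Finset.inter_subset_right
      intro u hu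
      refine Finset.mem_inter.2 ⟨?_, hu⟩
      have hcT := hconn T hT
      have hreach0 : (G.induce (↑T : Set V)).Reachable ⟨u, Finset.mem_coe.2 hu⟩
          ⟨v, Finset.mem_coe.2 hvT⟩ := hcT.preconnected _ _
      have hreach : G'.Reachable ⟨u, hsub (Finset.mem_coe.2 hu)⟩
          ⟨v, hsub (Finset.mem_coe.2 hvT)⟩ :=
        hreach0.map (G.induceHomOfLE hsub).toHom
      obtain ⟨hvW, hvC⟩ := (hmemD C v).1 hvD
      refine (hmemD C u).2 ⟨hsub (Finset.mem_coe.2 hu), ?_⟩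
      have : (⟨v, hsub (Finset.mem_coe.2 hvT)⟩ : W) = ⟨v, hvW⟩ := rfl
      rw [ConnectedComponent.sound hreach, this, hvC]
    · left
      rw [Finset.not_nonempty_iff_eq_empty] at hne'
      simp [hne']
  -- notation for the bad-part weight
  set g : G'.ConnectedComponent → Finset V → ℕ :=
    fun C T => if T ∩ S = ∅ ∧ T.card = k then 0 else (D C ∩ T).card with hgdef
  -- each |D C| is congruent to the bad-part weight mod k
  have hcong : ∀ C : G'.ConnectedComponent,
      (D C).card ≡ (P.map (g C)).sum [MOD k] := by
    intro C
    have h1 : (D C).card = (P.map (fun T => (D C ∩ T).card)).sum := by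
      rw [← aux_card_foldr (D C) P hdisj, hcover, Finset.inter_univ]
    rw [h1]
    refine aux_modeq k _ _ P fun T hT => ?_
    by_cases hgd : T ∩ S = ∅ ∧ T.card = k
    · rcases hgood T hT hgd.1 C with h | h
      · simp [hgdef, hgd, h, Nat.ModEq.refl]
      · simp only [hgdef, if_pos hgd, h, hgd.2]
        exact (Nat.modEq_zero_iff_dvd.2 dvd_rfl)
    · simp [hgdef, hgd, Nat.ModEq.refl]
  -- key natural-number inequality
  have hSsum : (P.map (fun T => (S ∩ T).card)).sum = S.card := by
    rw [← aux_card_foldr S P hdisj, hcover, Finset.inter_univ]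
  have hVsum : (P.map (fun T => T.card)).sum = Fintype.card V := by
    have := aux_card_foldr (Finset.univ : Finset V) P hdisj
    rw [hcover, Finset.inter_univ] at this
    rw [← Finset.card_univ, this]
    congr 1
    exact List.map_congr_left fun T _ => by rw [Finset.univ_inter]
  set L := P.dropLast with hLdef
  set T0 := P.getLast hne with hT0def
  have hPsplit : L ++ [T0] = P := List.dropLast_append_getLast hne
  -- |V| mod k = |T0| mod k
  have hLcard : (L.map (fun T => T.card)).sum = L.length * k := by
    have : ∀ x ∈ L.map (fun T => T.card), x = k := by
      intro x hx
      obtain ⟨T, hT, rfl⟩ := List.mem_map.1 hx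
      exact hsize T hT
    rw [List.sum_eq_card_nsmul _ k this, List.length_map, smul_eq_mul]
  have hVmod : Fintype.card V % k = T0.card % k := by
    have h1 : (P.map (fun T => T.card)).sum = L.length * k + T0.card := by
      rw [← hPsplit, List.map_append, List.sum_append, hLcard]; simp
    rw [← hVsum, h1, Nat.mul_comm, Nat.mul_add_mod]
  -- bound on the bad-part weight, summed over components
  have hbound : ∀ T ∈ P, T.card ≤ k → (if T ∩ S = ∅ ∧ T.card = k then 0 else (T \ S).card)
      ≤ (k - 1) * (S ∩ T).card + (if T ∩ S = ∅ ∧ T.card = k then 0 else T.card % k) := by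
    intro T _ hTk
    by_cases hgd : T ∩ S = ∅ ∧ T.card = k
    · simp [hgd]
    · rw [if_neg hgd, if_neg hgd]
      by_cases hTS : T ∩ S = ∅
      · -- then T.card ≠ k, so T.card < k and T \ S = T
        have hTk' : T.card ≠ k := fun h => hgd ⟨hTS, h⟩
        have h1 : T \ S = T := by
          rw [Finset.sdiff_eq_self_iff_disjoint]
          exact Finset.disjoint_left.2 fun v hv hvS =>
            (Finset.notMem_empty v) (hTS ▸ Finset.mem_inter.2 ⟨hv, hvS⟩)
        rw [h1, Nat.mod_eq_of_lt (lt_of_le_of_ne hTk hTk')]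
        exact Nat.le_add_left _ _
      · -- T meets S
        have hs1 : 1 ≤ (S ∩ T).card := by
          rw [Nat.one_le_iff_ne_zero, Ne, Finset.card_eq_zero, Finset.inter_comm]
          exact hTS
        have h2 : (T \ S).card + (T ∩ S).card = T.card := Finset.card_sdiff_add_card_inter T S
        have h3 : (T ∩ S).card = (S ∩ T).card := by rw [Finset.inter_comm]
        have hk1 : 1 ≤ k := by omega
        calc (T \ S).card = T.card - (T ∩ S).card := by omega
          _ ≤ k - 1 := by omega
          _ ≤ (k - 1) * (S ∩ T).card := Nat.le_mul_of_pos_right _ hs1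
          _ ≤ _ := Nat.le_add_right _ _
  have hTmemP : ∀ T ∈ P, T.card ≤ k := by
    intro T hT
    rw [← hPsplit] at hT
    rcases List.mem_append.1 hT with h | h
    · exact le_of_eq (hsize T h)
    · rw [List.mem_singleton.1 h]; exact hlast.2
  -- main natural number estimate
  have hnat : ∑ C : G'.ConnectedComponent, Nat.card C.supp % k
      ≤ (k - 1) * S.card + Fintype.card V % k := by
    have step1 : ∑ C : G'.ConnectedComponent, Nat.card C.supp % k
        ≤ ∑ C : G'.ConnectedComponent, (P.map (g C)).sum := by
      refine Finset.sum_le_sum fun C _ => ?_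
      calc Nat.card C.supp % k = (D C).card % k := by rw [hDcard]
        _ = (P.map (g C)).sum % k := hcong C
        _ ≤ (P.map (g C)).sum := Nat.mod_le _ _
    have step2 : ∑ C : G'.ConnectedComponent, (P.map (g C)).sum
        = (P.map (fun T => ∑ C : G'.ConnectedComponent, g C T)).sum := aux_swap g P
    have step3 : (P.map (fun T => ∑ C : G'.ConnectedComponent, g C T)).sum
        = (P.map (fun T => if T ∩ S = ∅ ∧ T.card = k then 0 else (T \ S).card)).sum := by
      congr 1
      refine List.map_congr_left fun T _ => ?_
      by_cases hgd : T ∩ S = ∅ ∧ T.card = k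
      · simp [hgdef, hgd]
      · simp only [hgdef, if_neg hgd]
        exact hpart T
    have step4 : (P.map (fun T => if T ∩ S = ∅ ∧ T.card = k then 0 else (T \ S).card)).sum
        ≤ (P.map (fun T => (k - 1) * (S ∩ T).card
            + (if T ∩ S = ∅ ∧ T.card = k then 0 else T.card % k))).sum :=
      aux_sum_le _ _ P fun T hT => hbound T hT (hTmemP T hT)
    have step5 : (P.map (fun T => (k - 1) * (S ∩ T).card
            + (if T ∩ S = ∅ ∧ T.card = k then 0 else T.card % k))).sum
        = (k - 1) * S.card
          + (P.map (fun T => if T ∩ S = ∅ ∧ T.card = k then 0 else T.card % k)).sum := by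
      rw [List.sum_map_add, aux_mul_sum, hSsum]
    have step6 : (P.map (fun T => if T ∩ S = ∅ ∧ T.card = k then 0 else T.card % k)).sum
        ≤ Fintype.card V % k := by
      rw [← hPsplit, List.map_append, List.sum_append]
      have hL0 : (L.map (fun T => if T ∩ S = ∅ ∧ T.card = k then 0 else T.card % k)).sum
          = 0 := by
        rw [List.sum_eq_zero]
        intro x hx
        obtain ⟨T, hT, rfl⟩ := List.mem_map.1 hx
        by_cases hgd : T ∩ S = ∅ ∧ T.card = k
        · simp [hgd]
        · rw [if_neg hgd, hsize T hT, Nat.mod_self]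
      rw [hL0, Nat.zero_add]
      simp only [List.map_singleton, List.sum_singleton]
      rw [hVmod]
      by_cases hgd : T0 ∩ S = ∅ ∧ T0.card = k
      · simp [hgd]
      · rw [if_neg hgd]
    calc ∑ C : G'.ConnectedComponent, Nat.card C.supp % k
        ≤ _ := step1
      _ = _ := step2
      _ = _ := step3
      _ ≤ _ := step4
      _ = _ := step5
      _ ≤ (k - 1) * S.card + Fintype.card V % k := Nat.add_le_add_left step6 _
  -- conclude over ℚ
  have hk1 : (0 : ℚ) < (k : ℚ) - 1 := by
    have : (2 : ℚ) ≤ (k : ℚ) := by exact_mod_cast hk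
    linarith
  rw [finsum_eq_sum_of_fintype]
  rw [one_div, inv_mul_le_iff₀ hk1]
  have hcast : ∑ C : G'.ConnectedComponent, ((Nat.card C.supp % k : ℕ) : ℚ)
      = ((∑ C : G'.ConnectedComponent, Nat.card C.supp % k : ℕ) : ℚ) := by
    push_cast
    rfl
  rw [hcast]
  have hMeq : ((k : ℚ) - 1) * ((S.card : ℚ) + ((Fintype.card V % k : ℕ) : ℚ) / ((k : ℚ) - 1))
      = ((k : ℚ) - 1) * (S.card : ℚ) + ((Fintype.card V % k : ℕ) : ℚ) := by
    field_simp
  rw [hMeq]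
  calc ((∑ C : G'.ConnectedComponent, Nat.card C.supp % k : ℕ) : ℚ)
      ≤ (((k - 1) * S.card + Fintype.card V % k : ℕ) : ℚ) := by exact_mod_cast hnat
    _ = ((k : ℚ) - 1) * (S.card : ℚ) + ((Fintype.card V % k : ℕ) : ℚ) := by
        push_cast [Nat.cast_sub (by omega : 1 ≤ k)]
        ring
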